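/- arXiv:1610.00532 — 4 statements merged into one kernel-verified Lean document; each statement's English description precedes it below -/
import Mathlib

section
/- Let G be a finite group of order n ≥ 2 in which every subgroup is normal (a Dedekind group), and let A be a finite set of size q ≥ 2. Then for any x, y ∈ A^G, there exists a bijective G-equivariant transformation τ : A^G → A^G with τ(xG) = yG if and only if G_x = G_y. -/
variable {G A : Type*}

/-- The right shift action of `G` on configurations `A^G`: `(x · g) h = x (h * g⁻¹)`. -/
def shift [Group G] (x : G → A) (g : G) : G → A := fun h => x (h * g⁻¹)

/-- A transformation of the configuration space is `G`-equivariant if it commutes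
with the shift action. -/
def equivariant [Group G] (τ : (G → A) → (G → A)) : Prop :=
  ∀ (x : G → A) (g : G), τ (shift x g) = shift (τ x) g

/-- The `G`-orbit of a configuration. -/
def orbit [Group G] (x : G → A) : Set (G → A) := Set.range (shift x)

/-- The stabilizer of a configuration, as a subgroup of `G`. -/
def stab [Group G] (x : G → A) : Subgroup G where
  carrier := {g : G | shift x g = x}
  one_mem' := by
    show shift x 1 = x
    funext h
    simp [shift]
  mul_mem' := by
    intro a b ha hb
    have ha' : shift x a = x := ha
    have hb' : shift x b = x := hb
    show shift x (a * b) = x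
    funext h
    show x (h * (a * b)⁻¹) = x h
    have key : h * (a * b)⁻¹ = h * b⁻¹ * a⁻¹ := by group
    rw [key]
    have h1 := congrFun ha' (h * b⁻¹)
    have h2 := congrFun hb' h
    simp only [shift] at h1 h2
    rw [h1, h2]
  inv_mem' := by
    intro a ha
    have ha' : shift x a = x := ha
    show shift x a⁻¹ = x
    funext h
    show x (h * a⁻¹⁻¹) = x h
    rw [inv_inv]
    have h1 := congrFun ha' (h * a)
    simp only [shift] at h1
    rw [mul_inv_cancel_right] at h1
    exact h1.symm

/-- Two subgroups `H`, `K` of `G` are conjugate, namely `K = g⁻¹ * H * g` for some `g ∈ G`. -/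
def conjSub [Group G] (H K : Subgroup G) : Prop :=
  ∃ g : G, ∀ a : G, a ∈ K ↔ g * a * g⁻¹ ∈ H

lemma shift_shift [Group G] (x : G → A) (g h : G) :
    shift (shift x g) h = shift x (g * h) := by
  funext k
  simp [shift, mul_inv_rev, mul_assoc]

lemma shift_one' [Group G] (x : G → A) : shift x 1 = x := by
  funext k; simp [shift]

lemma mem_stab [Group G] {x : G → A} {g : G} : g ∈ stab x ↔ shift x g = x := Iff.rfl

lemma shift_eq_iff [Group G] (u : G → A) (a b : G) :
    shift u a = shift u b ↔ a * b⁻¹ ∈ stab u := by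
  rw [mem_stab]
  constructor
  · intro h
    calc shift u (a * b⁻¹) = shift (shift u a) b⁻¹ := (shift_shift u a b⁻¹).symm
      _ = shift (shift u b) b⁻¹ := by rw [h]
      _ = shift u (b * b⁻¹) := shift_shift u b b⁻¹
      _ = u := by rw [mul_inv_cancel, shift_one']
  · intro h
    calc shift u a = shift u (a * b⁻¹ * b) := by group
      _ = shift (shift u (a * b⁻¹)) b := (shift_shift u _ b).symm
      _ = shift u b := by rw [h]

lemma stab_congr [Group G] {x y : G → A} (hs : stab x = stab y) {a b : G}
    (hab : shift x a = shift x b) : shift y a = shift y b := by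
  rw [shift_eq_iff] at hab ⊢
  rwa [← hs]

lemma stab_shift [Group G] (hded : ∀ H : Subgroup G, H.Normal) (y : G → A) (g : G) :
    stab (shift y g) = stab y := by
  ext h
  rw [mem_stab, shift_shift, shift_eq_iff]
  constructor
  · intro hm
    have := (hded (stab y)).conj_mem _ hm g⁻¹
    convert this using 1
    group
  · intro hm
    exact (hded (stab y)).conj_mem _ hm g

lemma orbit_shift [Group G] (x : G → A) (g : G) : orbit (shift x g) = orbit x := by
  ext z
  constructor
  · rintro ⟨a, rfl⟩
    exact ⟨g * a, (shift_shift x g a).symm⟩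
  · rintro ⟨a, rfl⟩
    exact ⟨g⁻¹ * a, by rw [shift_shift, mul_inv_cancel_left]⟩

lemma orbit_eq_of_mem [Group G] {x y z : G → A} (hx : z ∈ orbit x) (hy : z ∈ orbit y) :
    orbit x = orbit y := by
  obtain ⟨a, ha⟩ := hx
  obtain ⟨b, hb⟩ := hy
  calc orbit x = orbit (shift x a) := (orbit_shift x a).symm
    _ = orbit (shift y b) := by rw [ha, hb]
    _ = orbit y := orbit_shift y b

/-- if every subgroup of `G` is normal (Dedekind group), then for all
configurations `x`, `y` there is a bijective `G`-equivariant transformation mapping the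
orbit of `x` onto the orbit of `y` iff `stab x = stab y`. -/
theorem dedekind_exists_invertible_orbit_iff_stab_eq [Group G] [Fintype G] [Fintype A]
    (hn : 2 ≤ Fintype.card G) (hq : 2 ≤ Fintype.card A)
    (hded : ∀ H : Subgroup G, H.Normal) (x y : G → A) :
    (∃ τ : (G → A) → (G → A), Function.Bijective τ ∧ equivariant τ ∧
        τ '' orbit x = orbit y) ↔
      stab x = stab y := by
  classical
  constructor
  · rintro ⟨τ, hbij, heqv, himg⟩
    have hx0 : x ∈ orbit x := ⟨1, shift_one' x⟩
    have hτx : τ x ∈ orbit y := himg ▸ Set.mem_image_of_mem τ hx0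
    obtain ⟨g, hg⟩ := hτx
    have h1 : stab x = stab (τ x) := by
      ext h
      rw [mem_stab, mem_stab]
      constructor
      · intro hh
        have := heqv x h
        rw [hh] at this
        exact this.symm
      · intro hh
        have := heqv x h
        rw [hh] at this
        exact hbij.injective this
    rw [h1, ← hg, stab_shift hded]
  · intro hs
    by_cases he : orbit x = orbit y
    · exact ⟨id, Function.bijective_id, fun _ _ => rfl, by simpa using he⟩
    · have hdisj : ∀ z : G → A, z ∈ orbit x → z ∉ orbit y := fun z hzx hzy =>
        he (orbit_eq_of_mem hzx hzy)
      set τ : (G → A) → (G → A) := fun z =>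
        if hz : z ∈ orbit x then shift y (Classical.choose hz)
        else if hz' : z ∈ orbit y then shift x (Classical.choose hz') else z with hτ
      have τx : ∀ g : G, τ (shift x g) = shift y g := by
        intro g
        have hm : shift x g ∈ orbit x := ⟨g, rfl⟩
        have : τ (shift x g) = shift y (Classical.choose hm) := dif_pos hm
        rw [this]
        exact stab_congr hs (Classical.choose_spec hm)
      have τy : ∀ g : G, τ (shift y g) = shift x g := by
        intro g
        have hm : shift y g ∈ orbit y := ⟨g, rfl⟩
        have hnx : shift y g ∉ orbit x := fun hx' => hdisj _ hx' hm
        have : τ (shift y g) = shift x (Classical.choose hm) := by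
          rw [hτ]; simp only [dif_neg hnx, dif_pos hm]
        rw [this]
        exact stab_congr hs.symm (Classical.choose_spec hm)
      have τo : ∀ z : G → A, z ∉ orbit x → z ∉ orbit y → τ z = z := by
        intro z h1 h2
        rw [hτ]; simp only [dif_neg h1, dif_neg h2]
      have heqv : equivariant τ := by
        intro z g
        by_cases hzx : z ∈ orbit x
        · obtain ⟨a, rfl⟩ := hzx
          rw [shift_shift, τx, τx, ← shift_shift]
        · by_cases hzy : z ∈ orbit y
          · obtain ⟨a, rfl⟩ := hzy
            rw [shift_shift, τy, τy, ← shift_shift]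
          · have h1 : shift z g ∉ orbit x := by
              intro ⟨b, hb⟩
              exact hzx ⟨b * g⁻¹, by rw [← shift_shift, hb, shift_shift,
                mul_inv_cancel, shift_one']⟩
            have h2 : shift z g ∉ orbit y := by
              intro ⟨b, hb⟩
              exact hzy ⟨b * g⁻¹, by rw [← shift_shift, hb, shift_shift,
                mul_inv_cancel, shift_one']⟩
            rw [τo _ h1 h2, τo _ hzx hzy]
      have hinv : Function.Involutive τ := by
        intro z
        by_cases hzx : z ∈ orbit x
        · obtain ⟨a, rfl⟩ := hzx
          rw [τx, τy]
        · by_cases hzy : z ∈ orbit y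
          · obtain ⟨a, rfl⟩ := hzy
            rw [τy, τx]
          · rw [τo _ hzx hzy, τo _ hzx hzy]
      refine ⟨τ, hinv.bijective, heqv, ?_⟩
      ext z
      constructor
      · rintro ⟨w, ⟨a, rfl⟩, rfl⟩
        rw [τx]
        exact ⟨a, rfl⟩
      · rintro ⟨a, rfl⟩
        exact ⟨shift x a, ⟨a, rfl⟩, τx a⟩
end

section
/- Let G be a finite group and A a finite set of size q ≥ 2. Let R be a set of subgroups of G containing exactly one representative from each conjugacy class of subgroups. For each H ∈ R, let α_H denote the number of G-orbits on A^G all of whose configurations have stabilizer conjugate to H. Then the number of bijective G-equivariant transformations of A^G equals the product over H ∈ R of ( |N_G(H)| / |H| )^{α_H} · (α_H)!, where N_G(H) is the normalizer of H in G. -/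
variable {G A : Type*}

section Aux

variable [Group G]

instance shiftSMul : SMul G (G → A) := ⟨fun g x => shift x g⁻¹⟩

instance shiftMulAction : MulAction G (G → A) where
  one_smul x := by funext h; show x (h * (1:G)⁻¹⁻¹) = x h; simp
  mul_smul g g' x := by
    funext h
    show x (h * (g * g')⁻¹⁻¹) = x (h * g⁻¹⁻¹ * g'⁻¹⁻¹)
    simp [mul_assoc]

lemma smul_def' (g : G) (x : G → A) : g • x = shift x g⁻¹ := rfl

lemma shift_eq_smul (x : G → A) (g : G) : shift x g = g⁻¹ • x := by
  rw [smul_def', inv_inv]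

-- conjSub is an equivalence relation
lemma conjSub_refl (H : Subgroup G) : conjSub H H := ⟨1, fun a => by simp⟩

lemma conjSub_symm {H K : Subgroup G} (h : conjSub H K) : conjSub K H := by
  obtain ⟨g, hg⟩ := h
  refine ⟨g⁻¹, fun a => ?_⟩
  constructor
  · intro ha
    have := (hg (g⁻¹ * a * g)).mpr
    simp only [inv_inv] at *
    apply this
    group
    simpa using ha
  · intro ha
    have := (hg (g⁻¹ * a * g⁻¹⁻¹)).mp ha
    have e : g * (g⁻¹ * a * g⁻¹⁻¹) * g⁻¹ = a := by group
    rwa [e] at this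

lemma conjSub_trans {H K L : Subgroup G} (h1 : conjSub H K) (h2 : conjSub K L) :
    conjSub H L := by
  obtain ⟨g1, hg1⟩ := h1
  obtain ⟨g2, hg2⟩ := h2
  refine ⟨g1 * g2, fun a => ?_⟩
  rw [hg2 a, hg1 (g2 * a * g2⁻¹)]
  constructor <;> intro h <;> [skip; skip] <;>
    · have e : (g1 * g2) * a * (g1 * g2)⁻¹ = g1 * (g2 * a * g2⁻¹) * g1⁻¹ := by group
      first
      | (rwa [e])
      | (rwa [e] at h)

lemma conjSub_card {H K : Subgroup G} (h : conjSub H K) : Nat.card K = Nat.card H := by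
  obtain ⟨g, hg⟩ := h
  refine Nat.card_congr ⟨fun a => ⟨g * a * g⁻¹, (hg a).mp a.2⟩,
    fun b => ⟨g⁻¹ * b * g, (hg _).mpr (by
      have e : g * (g⁻¹ * ↑b * g) * g⁻¹ = ↑b := by group
      rw [e]; exact b.2)⟩, ?_, ?_⟩
  · intro a; ext; show g⁻¹ * (g * ↑a * g⁻¹) * g = ↑a; group
  · intro b; ext; show g * (g⁻¹ * ↑b * g) * g⁻¹ = ↑b; group

lemma conjSub_normalizer_mem {H K : Subgroup G} {g : G}
    (hg : ∀ a : G, a ∈ K ↔ g * a * g⁻¹ ∈ H) (b : G) :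
    b ∈ (Subgroup.normalizer (K : Set G)) ↔ g * b * g⁻¹ ∈ (Subgroup.normalizer (H : Set G)) := by
  have key : ∀ c : G, c ∈ H ↔ g⁻¹ * c * g ∈ K := by
    intro c
    have := hg (g⁻¹ * c * g)
    have e : g * (g⁻¹ * c * g) * g⁻¹ = c := by group
    rw [e] at this
    exact this.symm
  simp only [Subgroup.mem_normalizer_iff]
  constructor
  · intro hb c
    rw [key c, hb (g⁻¹ * c * g), hg (b * (g⁻¹ * c * g) * b⁻¹)]
    have e : g * (b * (g⁻¹ * c * g) * b⁻¹) * g⁻¹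
        = g * b * g⁻¹ * c * (g * b * g⁻¹)⁻¹ := by group
    rw [e]
  · intro hb c
    rw [hg c, hb (g * c * g⁻¹), hg (b * c * b⁻¹)]
    have e : g * b * g⁻¹ * (g * c * g⁻¹) * (g * b * g⁻¹)⁻¹
        = g * (b * c * b⁻¹) * g⁻¹ := by group
    rw [e]

lemma conjSub_normalizer_card {H K : Subgroup G} (h : conjSub H K) :
    Nat.card (Subgroup.normalizer (K : Set G)) = Nat.card (Subgroup.normalizer (H : Set G)) := by
  obtain ⟨g, hg⟩ := h
  exact conjSub_card ⟨g, conjSub_normalizer_mem hg⟩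

lemma mem_stabilizer_smul_iff (g a : G) (x : G → A) :
    a ∈ MulAction.stabilizer G (g • x) ↔ g⁻¹ * a * g ∈ MulAction.stabilizer G x := by
  simp only [MulAction.mem_stabilizer_iff, mul_smul, inv_smul_eq_iff]

lemma conjSub_stabilizer_smul (g : G) (x : G → A) :
    conjSub (MulAction.stabilizer G x) (MulAction.stabilizer G (g • x)) := by
  refine ⟨g⁻¹, fun a => ?_⟩
  rw [mem_stabilizer_smul_iff g a x, inv_inv]

lemma orbit_eq_mulAction (x : G → A) : orbit x = MulAction.orbit G x := by
  ext y
  constructor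
  · rintro ⟨g, rfl⟩
    rw [shift_eq_smul]
    exact MulAction.mem_orbit x g⁻¹
  · rintro ⟨g, rfl⟩
    exact ⟨g⁻¹, by rw [shift_eq_smul, inv_inv]⟩

lemma stab_eq_mulAction (x : G → A) : stab x = MulAction.stabilizer G x := by
  ext g
  have h1 : g ∈ stab x ↔ shift x g = x := Iff.rfl
  rw [h1, shift_eq_smul, inv_smul_eq_iff, eq_comm, MulAction.mem_stabilizer_iff]

lemma equivariant_iff_smul (τ : (G → A) → (G → A)) :
    equivariant τ ↔ ∀ (g : G) (x : G → A), τ (g • x) = g • τ x := by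
  constructor
  · intro h g x
    have := h x g⁻¹
    rwa [shift_eq_smul, shift_eq_smul, inv_inv] at this
  · intro h x g
    rw [shift_eq_smul, shift_eq_smul, h]

variable (G A) in
abbrev OQ := MulAction.orbitRel.Quotient G (G → A)

noncomputable def rep (q : OQ G A) : G → A := Quotient.out q

lemma mk_rep (q : OQ G A) : (Quotient.mk'' (rep q) : OQ G A) = q := Quotient.out_eq' q

lemma mk_eq_mk_iff {x y : G → A} :
    (Quotient.mk'' x : OQ G A) = Quotient.mk'' y ↔ ∃ g : G, g • y = x := by
  rw [Quotient.eq'']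
  exact (MulAction.orbitRel_apply (G := G)).trans MulAction.mem_orbit_iff

lemma mk_smul_eq (g : G) (x : G → A) :
    (Quotient.mk'' (g • x) : OQ G A) = Quotient.mk'' x :=
  mk_eq_mk_iff.mpr ⟨g, rfl⟩

lemma exists_smul_rep (x : G → A) :
    ∃ g : G, g • rep (Quotient.mk'' x : OQ G A) = x :=
  mk_eq_mk_iff.mp (mk_rep (Quotient.mk'' x)).symm

noncomputable def recon (f : OQ G A → (G → A)) : (G → A) → (G → A) :=
  fun x => (exists_smul_rep x).choose • f (Quotient.mk'' x)

lemma recon_eq (f : OQ G A → (G → A))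
    (hf : ∀ q, MulAction.stabilizer G (f q) = MulAction.stabilizer G (rep q))
    {x : G → A} {g : G} (hg : g • rep (Quotient.mk'' x : OQ G A) = x) :
    recon f x = g • f (Quotient.mk'' x) := by
  have hcs : (exists_smul_rep x).choose • rep (Quotient.mk'' x : OQ G A) = x :=
    (exists_smul_rep x).choose_spec
  set c := (exists_smul_rep x).choose with hc
  have hmem : c⁻¹ * g ∈ MulAction.stabilizer G (rep (Quotient.mk'' x : OQ G A)) := by
    rw [MulAction.mem_stabilizer_iff, mul_smul, hg, inv_smul_eq_iff, hcs]
  rw [← hf] at hmem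
  rw [MulAction.mem_stabilizer_iff, mul_smul, inv_smul_eq_iff] at hmem
  show c • f _ = g • f _
  exact hmem.symm

lemma recon_equivariant (f : OQ G A → (G → A))
    (hf : ∀ q, MulAction.stabilizer G (f q) = MulAction.stabilizer G (rep q)) :
    equivariant (recon f) := by
  rw [equivariant_iff_smul]
  intro g x
  obtain ⟨c, hc⟩ := exists_smul_rep x
  have hq : (Quotient.mk'' (g • x) : OQ G A) = Quotient.mk'' x := mk_smul_eq g x
  have hg2 : (g * c) • rep (Quotient.mk'' (g • x) : OQ G A) = g • x := by
    rw [hq, mul_smul, hc]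
  rw [recon_eq f hf hg2, recon_eq f hf hc, hq, mul_smul]

lemma recon_injective (f : OQ G A → (G → A))
    (hf : ∀ q, MulAction.stabilizer G (f q) = MulAction.stabilizer G (rep q))
    (hinj : Function.Injective fun q => (Quotient.mk'' (f q) : OQ G A)) :
    Function.Injective (recon f) := by
  intro x y h
  obtain ⟨c, hc⟩ := exists_smul_rep x
  obtain ⟨d, hd⟩ := exists_smul_rep y
  rw [recon_eq f hf hc, recon_eq f hf hd] at h
  have hq : (Quotient.mk'' x : OQ G A) = Quotient.mk'' y := by
    apply hinj
    show (Quotient.mk'' (f (Quotient.mk'' x)) : OQ G A) = Quotient.mk'' (f (Quotient.mk'' y))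
    rw [← mk_smul_eq c (f (Quotient.mk'' x)), h, mk_smul_eq]
  rw [hq] at h hc
  have hmem : d⁻¹ * c ∈ MulAction.stabilizer G (f (Quotient.mk'' y : OQ G A)) := by
    rw [MulAction.mem_stabilizer_iff, mul_smul, h, inv_smul_smul]
  rw [hf] at hmem
  rw [MulAction.mem_stabilizer_iff, mul_smul, inv_smul_eq_iff] at hmem
  rw [← hc, hmem, hd]

lemma stabilizer_eq_of_equivariant (τ : (G → A) → (G → A)) (hbij : Function.Bijective τ)
    (heq : equivariant τ) (x : G → A) :
    MulAction.stabilizer G (τ x) = MulAction.stabilizer G x := by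
  rw [equivariant_iff_smul] at heq
  ext g
  simp only [MulAction.mem_stabilizer_iff]
  constructor
  · intro h
    apply hbij.1
    rw [heq, h]
  · intro h
    rw [← heq, h]

lemma card_E [Fintype G] [Finite A] :
    Nat.card {τ : (G → A) → (G → A) // Function.Bijective τ ∧ equivariant τ} =
    Nat.card {f : OQ G A → (G → A) //
      (∀ q, MulAction.stabilizer G (f q) = MulAction.stabilizer G (rep q)) ∧
      Function.Injective fun q => (Quotient.mk'' (f q) : OQ G A)} := by
  have key : ∀ τ : {τ : (G → A) → (G → A) // Function.Bijective τ ∧ equivariant τ},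
      Function.Injective fun q => (Quotient.mk'' (τ.1 (rep q)) : OQ G A) := by
    rintro ⟨τ, hbij, heq⟩ q q' h
    rw [equivariant_iff_smul] at heq
    simp only at h
    obtain ⟨g, hg⟩ := mk_eq_mk_iff.mp h
    rw [← heq] at hg
    have h2 := hbij.1 hg
    rw [← mk_rep q, ← mk_rep q', ← h2, mk_smul_eq]
  apply Nat.card_congr
  exact
    { toFun := fun τ => ⟨fun q => τ.1 (rep q), fun q =>
        stabilizer_eq_of_equivariant τ.1 τ.2.1 τ.2.2 (rep q), key τ⟩
      invFun := fun f => ⟨recon f.1,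
        Finite.injective_iff_bijective.mp (recon_injective f.1 f.2.1 f.2.2),
        recon_equivariant f.1 f.2.1⟩
      left_inv := fun τ => by
        apply Subtype.ext
        funext x
        show recon (fun q => τ.1 (rep q)) x = τ.1 x
        obtain ⟨c, hc⟩ := exists_smul_rep x
        rw [recon_eq _ (fun q => stabilizer_eq_of_equivariant τ.1 τ.2.1 τ.2.2 (rep q)) hc]
        have heq := τ.2.2
        rw [equivariant_iff_smul] at heq
        rw [← heq, hc]
      right_inv := fun f => by
        apply Subtype.ext
        funext q
        show recon f.1 (rep q) = f.1 q
        have hg : (1 : G) • rep (Quotient.mk'' (rep q) : OQ G A) = rep q := by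
          rw [one_smul, mk_rep]
        rw [recon_eq f.1 f.2.1 hg, one_smul, mk_rep] }

lemma card_fib [Fintype G] [Finite A] (q' q : OQ G A)
    (h : conjSub (MulAction.stabilizer G (rep q')) (MulAction.stabilizer G (rep q))) :
    Nat.card {y : G → A // (Quotient.mk'' y : OQ G A) = q' ∧
        MulAction.stabilizer G y = MulAction.stabilizer G (rep q)} *
      Nat.card (MulAction.stabilizer G (rep q)) =
    Nat.card (Subgroup.normalizer ((MulAction.stabilizer G (rep q) : Subgroup G) : Set G)) := by
  classical
  set K := MulAction.stabilizer G (rep q) with hK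
  set N := (Subgroup.normalizer (K : Set G)) with hN
  obtain ⟨g, hg⟩ := h
  set z := rep q' with hz
  set y₀ := g⁻¹ • z with hy₀
  have hstab : MulAction.stabilizer G y₀ = K := by
    ext a
    rw [hy₀, mem_stabilizer_smul_iff, inv_inv]
    exact (hg a).symm
  have hmk : (Quotient.mk'' y₀ : OQ G A) = q' := by
    rw [hy₀, mk_smul_eq]
    exact mk_rep q'
  have hiff : ∀ y : G → A, ((Quotient.mk'' y : OQ G A) = q' ∧
      MulAction.stabilizer G y = K) ↔ y ∈ MulAction.orbit N y₀ := by
    intro y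
    constructor
    · rintro ⟨h1, h2⟩
      obtain ⟨c, hc⟩ := mk_eq_mk_iff.mp (h1.trans hmk.symm)
      have step : ∀ a : G, a ∈ MulAction.stabilizer G y ↔ c⁻¹ * a * c ∈ K := by
        intro a
        rw [← hc, mem_stabilizer_smul_iff, hstab]
      have hcN : c ∈ N := by
        rw [← inv_inv c]
        apply Subgroup.inv_mem
        rw [hN, Subgroup.mem_normalizer_iff]
        intro a
        rw [inv_inv, ← step a, h2]
      exact MulAction.mem_orbit_iff.mpr ⟨⟨c, hcN⟩, hc⟩
    · intro hy
      obtain ⟨n, rfl⟩ := MulAction.mem_orbit_iff.mp hy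
      have hsm : (n • y₀ : G → A) = (n : G) • y₀ := rfl
      constructor
      · rw [hsm, mk_smul_eq, hmk]
      · ext a
        rw [hsm, mem_stabilizer_smul_iff, hstab]
        have hn := (Subgroup.mem_normalizer_iff.mp n.2) ((n : G)⁻¹ * a * (n : G))
        have e : (n : G) * ((n : G)⁻¹ * a * (n : G)) * (n : G)⁻¹ = a := by group
        rw [e] at hn
        exact hn
  have e1 : Nat.card {y : G → A // (Quotient.mk'' y : OQ G A) = q' ∧
      MulAction.stabilizer G y = K} = Nat.card (MulAction.orbit N y₀) :=
    Nat.card_congr (Equiv.subtypeEquivRight hiff)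
  have e2 : MulAction.stabilizer N y₀ = K.subgroupOf N := by
    ext n
    rw [Subgroup.mem_subgroupOf, ← hstab]
    exact Iff.rfl
  have e3 : Nat.card (K.subgroupOf N) = Nat.card K :=
    Nat.card_congr (Subgroup.subgroupOfEquivOfLe Subgroup.le_normalizer).toEquiv
  haveI : Fintype (MulAction.orbit N y₀) := Fintype.ofFinite _
  haveI : Fintype N := Fintype.ofFinite _
  haveI : Fintype (MulAction.stabilizer N y₀) := Fintype.ofFinite _
  have os := MulAction.card_orbit_mul_card_stabilizer_eq_card_group N y₀
  rw [← Nat.card_eq_fintype_card, ← Nat.card_eq_fintype_card,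
    ← Nat.card_eq_fintype_card] at os
  rw [e2, e3] at os
  rw [e1]
  exact os

lemma card_T [Fintype G] [Finite A] [Fintype (OQ G A)] (cl : OQ G A → Subgroup G)
    (hconj : ∀ q, conjSub (cl q) (MulAction.stabilizer G (rep q)))
    (hcl : ∀ q q', conjSub (MulAction.stabilizer G (rep q)) (MulAction.stabilizer G (rep q'))
      → cl q = cl q') :
    Nat.card {f : OQ G A → (G → A) //
      (∀ q, MulAction.stabilizer G (f q) = MulAction.stabilizer G (rep q)) ∧
      Function.Injective fun q => (Quotient.mk'' (f q) : OQ G A)} =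
    Nat.card {π : OQ G A → OQ G A // Function.Injective π ∧ ∀ q, cl (π q) = cl q} *
      ∏ q : OQ G A, (Nat.card (Subgroup.normalizer ((cl q : Subgroup G) : Set G)) / Nat.card (cl q)) := by
  classical
  have conj_of_cl : ∀ q q', cl q = cl q' →
      conjSub (MulAction.stabilizer G (rep q)) (MulAction.stabilizer G (rep q')) := by
    intro q q' h
    exact conjSub_trans (conjSub_symm (hconj q)) (h ▸ hconj q')
  have clpres : ∀ f : {f : OQ G A → (G → A) //
      (∀ q, MulAction.stabilizer G (f q) = MulAction.stabilizer G (rep q)) ∧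
      Function.Injective fun q => (Quotient.mk'' (f q) : OQ G A)},
      ∀ q, cl (Quotient.mk'' (f.1 q) : OQ G A) = cl q := by
    intro f q
    obtain ⟨g, hg⟩ := mk_eq_mk_iff.mp (mk_rep (Quotient.mk'' (f.1 q) : OQ G A)).symm
    apply hcl
    apply conjSub_symm
    have h2 : rep (Quotient.mk'' (f.1 q) : OQ G A) = g⁻¹ • f.1 q :=
      eq_inv_smul_iff.mpr hg
    rw [← f.2.1 q, h2]
    exact conjSub_stabilizer_smul g⁻¹ (f.1 q)
  set T := {f : OQ G A → (G → A) //
      (∀ q, MulAction.stabilizer G (f q) = MulAction.stabilizer G (rep q)) ∧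
      Function.Injective fun q => (Quotient.mk'' (f q) : OQ G A)} with hT
  set P := {π : OQ G A → OQ G A // Function.Injective π ∧ ∀ q, cl (π q) = cl q} with hP
  set proj : T → P := fun f => ⟨fun q => (Quotient.mk'' (f.1 q) : OQ G A), f.2.2, clpres f⟩
    with hprojdef
  have equiv2 : ∀ π : P, {f : T // proj f = π} ≃
      (∀ q : OQ G A, {y : G → A // (Quotient.mk'' y : OQ G A) = π.1 q ∧
        MulAction.stabilizer G y = MulAction.stabilizer G (rep q)}) := by
    intro π
    refine
      { toFun := fun f => fun q => ⟨f.1.1 q, ?_, f.1.2.1 q⟩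
        invFun := fun t => ⟨⟨fun q => (t q).1, fun q => (t q).2.2, ?_⟩, ?_⟩
        left_inv := fun f => by
          apply Subtype.ext
          apply Subtype.ext
          rfl
        right_inv := fun t => by
          funext q
          apply Subtype.ext
          rfl }
    · exact congrFun (congrArg (fun (p : P) => (p.1 : OQ G A → OQ G A)) f.2) q
    · have he : (fun q => (Quotient.mk'' ((t q).1) : OQ G A)) = π.1 :=
        funext fun q => (t q).2.1
      rw [he]
      exact π.2.1
    · apply Subtype.ext
      funext q
      exact (t q).2.1
  haveI : ∀ π : P, Fintype (∀ q : OQ G A, {y : G → A // (Quotient.mk'' y : OQ G A) = π.1 q ∧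
      MulAction.stabilizer G y = MulAction.stabilizer G (rep q)}) :=
    fun π => Fintype.ofFinite _
  haveI : Fintype P := Fintype.ofFinite _
  haveI : Fintype T := Fintype.ofFinite _
  have fibcard : ∀ (π : P) (q : OQ G A),
      Nat.card {y : G → A // (Quotient.mk'' y : OQ G A) = π.1 q ∧
        MulAction.stabilizer G y = MulAction.stabilizer G (rep q)} =
      Nat.card (Subgroup.normalizer ((cl q : Subgroup G) : Set G)) / Nat.card (cl q) := by
    intro π q
    have hc := card_fib (π.1 q) q (conj_of_cl (π.1 q) q (π.2.2 q))
    rw [conjSub_card (hconj q), conjSub_normalizer_card (hconj q)] at hc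
    have hpos : 0 < Nat.card (cl q) := Nat.card_pos
    exact (Nat.div_eq_of_eq_mul_left hpos hc.symm).symm
  calc Nat.card T
      = Nat.card (Σ π : P, ∀ q : OQ G A, {y : G → A // (Quotient.mk'' y : OQ G A) = π.1 q ∧
          MulAction.stabilizer G y = MulAction.stabilizer G (rep q)}) :=
        Nat.card_congr ((Equiv.sigmaFiberEquiv proj).symm.trans (Equiv.sigmaCongrRight equiv2))
    _ = ∑ _π : P, ∏ q : OQ G A, (Nat.card (Subgroup.normalizer ((cl q : Subgroup G) : Set G)) / Nat.card (cl q)) := by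
        rw [Nat.card_eq_fintype_card, Fintype.card_sigma]
        apply Finset.sum_congr rfl
        intro π _
        rw [← Nat.card_eq_fintype_card, Nat.card_pi]
        exact Finset.prod_congr rfl fun q _ => fibcard π q
    _ = Nat.card P * ∏ q : OQ G A, (Nat.card (Subgroup.normalizer ((cl q : Subgroup G) : Set G)) / Nat.card (cl q)) := by
        rw [Finset.sum_const, Finset.card_univ, ← Nat.card_eq_fintype_card, smul_eq_mul]

lemma card_P [Fintype G] [Finite A] [Fintype (OQ G A)] (R : Finset (Subgroup G))
    (cl : OQ G A → Subgroup G) (hmem : ∀ q, cl q ∈ R) :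
    Nat.card {π : OQ G A → OQ G A // Function.Injective π ∧ ∀ q, cl (π q) = cl q} =
    ∏ H ∈ R, (Nat.card {q : OQ G A // cl q = H}).factorial := by
  classical
  have e : {π : OQ G A → OQ G A // Function.Injective π ∧ ∀ q, cl (π q) = cl q} ≃
      (∀ H : {H : Subgroup G // H ∈ R}, Equiv.Perm {q : OQ G A // cl q = H.1}) := by
    refine
      { toFun := fun π H => Equiv.ofBijective
          (fun x => (⟨π.1 x.1, by rw [π.2.2, x.2]⟩ : {q : OQ G A // cl q = H.1}))
          (Finite.injective_iff_bijective.mp fun a b hab =>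
            Subtype.ext (π.2.1 (congrArg Subtype.val hab)))
        invFun := fun σ => ⟨fun q => (σ ⟨cl q, hmem q⟩ ⟨q, rfl⟩).1, ?_, fun q =>
          (σ ⟨cl q, hmem q⟩ ⟨q, rfl⟩).2⟩
        left_inv := fun π => by
          apply Subtype.ext
          funext q
          rfl
        right_inv := fun σ => by
          funext H
          apply Equiv.ext
          intro x
          apply Subtype.ext
          obtain ⟨Hv, hm⟩ := H
          obtain ⟨q, hq⟩ := x
          dsimp at hq ⊢
          subst hq
          rfl }
    · have keyinj : ∀ (H H' : {H : Subgroup G // H ∈ R}) (_ : H = H')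
          (a : {q : OQ G A // cl q = H.1}) (b : {q : OQ G A // cl q = H'.1}),
          (σ H a).1 = (σ H' b).1 → a.1 = b.1 := by
        rintro H H' rfl a b hab
        exact congrArg Subtype.val ((σ H).injective (Subtype.ext hab))
      intro q q' h
      have hcl' : cl q = cl q' := by
        have h1 : cl ((σ ⟨cl q, hmem q⟩ ⟨q, rfl⟩).1) = cl q :=
          (σ ⟨cl q, hmem q⟩ ⟨q, rfl⟩).2
        have h2 : cl ((σ ⟨cl q', hmem q'⟩ ⟨q', rfl⟩).1) = cl q' :=
          (σ ⟨cl q', hmem q'⟩ ⟨q', rfl⟩).2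
        rw [← h1, ← h2]
        exact congrArg cl h
      exact keyinj ⟨cl q, hmem q⟩ ⟨cl q', hmem q'⟩ (Subtype.ext hcl') ⟨q, rfl⟩ ⟨q', rfl⟩ h
  rw [Nat.card_congr e, Nat.card_pi]
  rw [← Finset.prod_coe_sort R (fun H => (Nat.card {q : OQ G A // cl q = H}).factorial)]
  apply Finset.prod_congr rfl
  intro H _
  haveI : Fintype {q : OQ G A // cl q = H.1} := Fintype.ofFinite _
  rw [Nat.card_eq_fintype_card, Fintype.card_perm, ← Nat.card_eq_fintype_card]

lemma conjSub_stab_rep (x : G → A) :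
    conjSub (MulAction.stabilizer G x)
      (MulAction.stabilizer G (rep (Quotient.mk'' x : OQ G A))) := by
  obtain ⟨g, hg⟩ := exists_smul_rep x
  have h2 : rep (Quotient.mk'' x : OQ G A) = g⁻¹ • x := eq_inv_smul_iff.mpr hg
  rw [h2]
  exact conjSub_stabilizer_smul g⁻¹ x

lemma card_fiber_eq_alpha [Fintype G] [Finite A] (R : Finset (Subgroup G))
    (cl : OQ G A → Subgroup G)
    (hconj : ∀ q, conjSub (cl q) (MulAction.stabilizer G (rep q)))
    (huniq : ∀ q H, H ∈ R → conjSub H (MulAction.stabilizer G (rep q)) → H = cl q)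
    (H : Subgroup G) (hH : H ∈ R) :
    Nat.card {O : Set (G → A) // ∃ x : G → A, O = orbit x ∧ conjSub (stab x) H} =
    Nat.card {q : OQ G A // cl q = H} := by
  have key : ∀ (O : {O : Set (G → A) // ∃ x : G → A, O = orbit x ∧ conjSub (stab x) H})
      (q : OQ G A), O.1 = orbit (rep q) → (Quotient.mk'' O.2.choose : OQ G A) = q := by
    intro O q h
    obtain ⟨h1, h2⟩ := O.2.choose_spec
    have h3' : orbit (rep q) = orbit O.2.choose := h.symm.trans h1
    have h3 : MulAction.orbit G (rep q) = MulAction.orbit G O.2.choose := by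
      rw [← orbit_eq_mulAction, ← orbit_eq_mulAction]
      exact h3'
    obtain ⟨g, hg⟩ := MulAction.mem_orbit_iff.mp (MulAction.orbit_eq_iff.mp h3)
    have h4 : (Quotient.mk'' (g • O.2.choose) : OQ G A) = q := by
      rw [hg]
      exact mk_rep q
    exact (mk_smul_eq g _).symm.trans h4
  have key2 : ∀ x : G → A, orbit (rep (Quotient.mk'' x : OQ G A)) = orbit x := by
    intro x
    rw [orbit_eq_mulAction, orbit_eq_mulAction]
    apply MulAction.orbit_eq_iff.mpr
    obtain ⟨g, hg⟩ := exists_smul_rep x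
    exact MulAction.mem_orbit_iff.mpr ⟨g⁻¹, (eq_inv_smul_iff.mpr hg).symm⟩
  symm
  apply Nat.card_congr
  refine
    { toFun := fun q => ⟨orbit (rep q.1), rep q.1, rfl, ?_⟩
      invFun := fun O => ⟨(Quotient.mk'' O.2.choose : OQ G A), ?_⟩
      left_inv := fun q => Subtype.ext (key _ q.1 rfl)
      right_inv := fun O => Subtype.ext ((key2 _).trans O.2.choose_spec.1.symm) }
  · rw [stab_eq_mulAction]
    have h := hconj q.1
    rw [q.2] at h
    exact conjSub_symm h
  · obtain ⟨h1, h2⟩ := O.2.choose_spec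
    refine (huniq _ H hH ?_).symm
    rw [stab_eq_mulAction] at h2
    exact conjSub_trans (conjSub_symm h2) (conjSub_stab_rep O.2.choose)

end Aux

/-- structure of `ICA(G;A)`, cardinality version: if `R` contains
exactly one representative of each conjugacy class of subgroups of `G`, and for
`H ∈ R`, `α H` is the number of `G`-orbits on `A^G` whose configurations have
stabilizer conjugate to `H`, then the number of bijective `G`-equivariant
transformations of `A^G` is `∏_{H ∈ R} (|N_G(H)|/|H|)^{α H} · (α H)!`. -/
theorem card_invertible_CA [Group G] [Fintype G] [Fintype A]
    (hq : 2 ≤ Fintype.card A)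
    (R : Finset (Subgroup G))
    (hR : ∀ K : Subgroup G, ∃! H : Subgroup G, H ∈ R ∧ conjSub H K)
    (α : Subgroup G → ℕ)
    (hα : ∀ H : Subgroup G,
      α H = Nat.card {O : Set (G → A) // ∃ x : G → A, O = orbit x ∧ conjSub (stab x) H}) :
    Nat.card {τ : (G → A) → (G → A) // Function.Bijective τ ∧ equivariant τ} =
      ∏ H ∈ R, (Nat.card (Subgroup.normalizer (H : Set G)) / Nat.card H) ^ (α H) * (α H).factorial := by
  classical
  haveI : Fintype (OQ G A) := Fintype.ofFinite _
  set cl : OQ G A → Subgroup G :=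
    fun q => (hR (MulAction.stabilizer G (rep q))).choose with hcldef
  have hmem : ∀ q, cl q ∈ R := fun q => ((hR _).choose_spec).1.1
  have hconj : ∀ q, conjSub (cl q) (MulAction.stabilizer G (rep q)) :=
    fun q => ((hR _).choose_spec).1.2
  have huniq : ∀ q H, H ∈ R → conjSub H (MulAction.stabilizer G (rep q)) → H = cl q :=
    fun q H h1 h2 => ((hR _).choose_spec).2 H ⟨h1, h2⟩
  have hclconj : ∀ q q', conjSub (MulAction.stabilizer G (rep q))
      (MulAction.stabilizer G (rep q')) → cl q = cl q' :=
    fun q q' h => huniq q' (cl q) (hmem q) (conjSub_trans (hconj q) h)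
  have hα' : ∀ H ∈ R, α H = Nat.card {q : OQ G A // cl q = H} := by
    intro H hH
    rw [hα H, card_fiber_eq_alpha R cl hconj huniq H hH]
  rw [card_E, card_T cl hconj hclconj, card_P R cl hmem]
  have hprod : ∏ q : OQ G A, (Nat.card (Subgroup.normalizer ((cl q : Subgroup G) : Set G)) / Nat.card (cl q)) =
      ∏ H ∈ R, (Nat.card (Subgroup.normalizer (H : Set G)) / Nat.card H) ^ (Nat.card {q : OQ G A // cl q = H}) := by
    rw [← Finset.prod_fiberwise_of_maps_to (fun q (_ : q ∈ Finset.univ) => hmem q)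
      (fun q => Nat.card (Subgroup.normalizer ((cl q : Subgroup G) : Set G)) / Nat.card (cl q))]
    apply Finset.prod_congr rfl
    intro H hH
    have hc : ∀ q ∈ Finset.filter (fun q => cl q = H) Finset.univ,
        (Nat.card (Subgroup.normalizer ((cl q : Subgroup G) : Set G)) / Nat.card (cl q)) =
        (Nat.card (Subgroup.normalizer (H : Set G)) / Nat.card H) := by
      intro q hq
      rw [(Finset.mem_filter.mp hq).2]
    rw [Finset.prod_congr rfl hc, Finset.prod_const]
    congr 1
    rw [Nat.card_eq_fintype_card, Fintype.card_subtype]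
  rw [hprod, ← Finset.prod_mul_distrib]
  apply Finset.prod_congr rfl
  intro H hH
  rw [hα' H hH, mul_comm]
end

section
/- Let G be a finite group, A a finite set, and H a normal subgroup of G. Then the number of configurations x ∈ A^G with stabilizer G_x = H equals the number of configurations y ∈ A^{G/H} whose stabilizer under the shift action of the quotient group G/H is trivial. -/
variable {G A : Type*}

lemma mem_stab_iff [Group G] (x : G → A) (g : G) : g ∈ stab x ↔ shift x g = x :=
  Iff.rfl

lemma shift_comp_mk [Group G] (H : Subgroup G) [H.Normal] (y : G ⧸ H → A) (g : G) :
    shift (y ∘ QuotientGroup.mk) g =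
      (shift y (QuotientGroup.mk g)) ∘ (QuotientGroup.mk : G → G ⧸ H) := by
  funext k
  simp [shift]

lemma stab_comp_mk [Group G] (H : Subgroup G) [H.Normal] (y : G ⧸ H → A) :
    stab (y ∘ QuotientGroup.mk) = (stab y).comap (QuotientGroup.mk' H) := by
  ext g
  rw [Subgroup.mem_comap, mem_stab_iff, mem_stab_iff, shift_comp_mk]
  constructor
  · intro h
    funext q
    obtain ⟨k, rfl⟩ := QuotientGroup.mk_surjective q
    exact congrFun h k
  · intro h
    rw [show (QuotientGroup.mk g : G ⧸ H) = (QuotientGroup.mk' H) g from rfl, h]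

/-- for a normal subgroup `H` of `G`, the number of configurations
in `A^G` with stabilizer exactly `H` equals the number of configurations in
`A^{G/H}` with trivial stabilizer under the shift action of `G/H`. -/
theorem card_stab_eq_normal [Group G] [Fintype G] [Fintype A]
    (H : Subgroup G) [hH : H.Normal] :
    Nat.card {x : G → A // stab x = H} =
      Nat.card {y : G ⧸ H → A // stab y = ⊥} := by
  symm
  refine Nat.card_eq_of_bijective
    (fun y => ⟨(y : G ⧸ H → A) ∘ QuotientGroup.mk, ?_⟩) ⟨?_, ?_⟩
  · rw [stab_comp_mk]
    ext g
    rw [Subgroup.mem_comap, y.2, Subgroup.mem_bot]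
    exact (QuotientGroup.eq_one_iff (N := H) g)
  · rintro ⟨y₁, h₁⟩ ⟨y₂, h₂⟩ h
    have h' : y₁ ∘ (QuotientGroup.mk : G → G ⧸ H) = y₂ ∘ QuotientGroup.mk :=
      congrArg Subtype.val h
    ext q
    obtain ⟨k, rfl⟩ := QuotientGroup.mk_surjective q
    exact congrFun h' k
  · rintro ⟨x, hx⟩
    have hconst : ∀ a b : G, (QuotientGroup.mk a : G ⧸ H) = QuotientGroup.mk b →
        x a = x b := by
      intro a b hab
      have hmem : a⁻¹ * b ∈ H := (QuotientGroup.eq).mp hab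
      rw [← hx] at hmem
      have := congrFun hmem b
      simp only [shift] at this
      rw [mul_inv_rev, inv_inv, ← mul_assoc, mul_inv_cancel, one_mul] at this
      exact this
    let y : G ⧸ H → A := fun q =>
      Quotient.liftOn' q x (fun a b hab => hconst a b (Quotient.sound' hab))
    have hyx : y ∘ (QuotientGroup.mk : G → G ⧸ H) = x := rfl
    have hstab : stab y = ⊥ := by
      ext q
      rw [Subgroup.mem_bot]
      obtain ⟨g, rfl⟩ := QuotientGroup.mk_surjective q
      have : (QuotientGroup.mk g : G ⧸ H) ∈ stab y ↔ g ∈ (stab y).comap (QuotientGroup.mk' H) :=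
        Iff.rfl
      rw [this, ← stab_comp_mk, hyx, hx]
      exact ((QuotientGroup.eq_one_iff (N := H) g).symm)
    exact ⟨⟨y, hstab⟩, Subtype.ext hyx⟩
end

section
/- Let G be a finite group of order n ≥ 2, let p be the smallest prime dividing n, and let c denote the number of elements of G of order exactly p. For each integer q ≥ 2 let f(q) be the number of configurations x : G → {0,…,q−1} with trivial stabilizer under the shift action. Then f(q) = q^n − (c/(p−1))·q^{n/p} + o(q^{n/p}) as q → ∞; that is, the function q ↦ f(q) − q^n + (c/(p−1))·q^{n/p} is little-o of q^{n/p} as q tends to infinity. -/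
variable {G A : Type*}

open Finset

section Aux

variable [Group G] [Fintype G]

open scoped Classical in
noncomputable def fixSet (q : ℕ) (H : Subgroup G) : Finset (G → Fin q) :=
  Finset.univ.filter (fun x => H ≤ stab x)

open scoped Classical in
lemma card_fixSet (q : ℕ) (H : Subgroup G) :
    (fixSet q H).card = q ^ (Fintype.card G / Nat.card H) := by
  classical
  have hΦ : Function.Bijective (fun (y : G ⧸ H → Fin q) =>
      (⟨fun g => y (QuotientGroup.mk g), by
        intro h hh
        show shift _ h = _
        funext g
        show y (QuotientGroup.mk (g * h⁻¹)) = y (QuotientGroup.mk g)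
        rw [QuotientGroup.mk_mul_of_mem g (H.inv_mem hh)]⟩ :
        {x : G → Fin q // H ≤ stab x})) := by
    constructor
    · intro y y' hyy'
      have h2 := congrArg Subtype.val hyy'
      funext c
      obtain ⟨g, rfl⟩ := QuotientGroup.mk_surjective c
      exact congrFun h2 g
    · rintro ⟨x, hx⟩
      refine ⟨fun c => x c.out, Subtype.ext ?_⟩
      funext g
      show x (QuotientGroup.mk g : G ⧸ H).out = x g
      have h1 : QuotientGroup.mk (QuotientGroup.mk g : G ⧸ H).out
          = (QuotientGroup.mk g : G ⧸ H) := QuotientGroup.out_eq' _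
      have h2 : ((QuotientGroup.mk g : G ⧸ H).out)⁻¹ * g ∈ H := QuotientGroup.eq.mp h1
      have h3 : shift x (((QuotientGroup.mk g : G ⧸ H).out)⁻¹ * g)⁻¹ = x := hx (H.inv_mem h2)
      have h4 := congrFun h3 ((QuotientGroup.mk g : G ⧸ H).out)
      simp only [shift, inv_inv] at h4
      rw [mul_inv_cancel_left] at h4
      exact h4.symm
  have hcard : Nat.card {x : G → Fin q // H ≤ stab x} = Nat.card (G ⧸ H → Fin q) :=
    (Nat.card_congr (Equiv.ofBijective _ hΦ)).symm
  have hq : Nat.card (G ⧸ H) = Fintype.card G / Nat.card H := by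
    have := Subgroup.card_eq_card_quotient_mul_card_subgroup H
    have hpos : 0 < Nat.card H := Nat.card_pos
    rw [Nat.card_eq_fintype_card] at this
    rw [this, Nat.mul_div_cancel _ hpos]
  calc (fixSet q H).card = Nat.card {x : G → Fin q // H ≤ stab x} := by
        rw [Nat.card_eq_fintype_card, fixSet, Fintype.card_subtype]
    _ = Nat.card (G ⧸ H → Fin q) := hcard
    _ = q ^ (Fintype.card G / Nat.card H) := by
        rw [Nat.card_fun, Nat.card_eq_fintype_card (α := Fin q), Fintype.card_fin, hq]

end Aux
section Aux2

variable [Group G] [Fintype G]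

lemma exists_prime_orderOf_mem {K : Subgroup G} (hK : K ≠ ⊥) :
    ∃ g ∈ K, (orderOf g).Prime := by
  obtain ⟨⟨g, hgK⟩, hg⟩ := Subgroup.ne_bot_iff_exists_ne_one.mp hK
  have hg1 : g ≠ 1 := by simpa [Subtype.ext_iff] using hg
  have hm1 : orderOf g ≠ 1 := by simpa using hg1
  have hm0 : orderOf g ≠ 0 := (orderOf_pos g).ne'
  have hp : (orderOf g).minFac.Prime := Nat.minFac_prime hm1
  refine ⟨g ^ (orderOf g / (orderOf g).minFac), K.pow_mem hgK _, ?_⟩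
  rw [orderOf_pow, Nat.gcd_eq_right (Nat.div_dvd_of_dvd (orderOf g).minFac_dvd),
    Nat.div_div_self (orderOf g).minFac_dvd hm0]
  exact hp

open scoped Classical in
lemma card_orderOf_eq_prime {r : ℕ} (hr : r.Prime) :
    (univ.filter (fun g : G => orderOf g = r)).card
      = (univ.filter (fun P : Subgroup G => Nat.card P = r)).card * (r - 1) := by
  classical
  rw [Finset.card_eq_sum_card_fiberwise
    (f := fun g : G => Subgroup.zpowers g)
    (t := univ.filter (fun P : Subgroup G => Nat.card P = r))
    (fun g hg => by
      simp only [mem_coe, mem_filter, mem_univ, true_and] at hg ⊢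
      rw [Nat.card_zpowers, hg])]
  rw [Finset.sum_congr rfl (fun P hP => ?_), Finset.sum_const, smul_eq_mul]
  simp only [mem_filter, mem_univ, true_and] at hP
  have hfib : (univ.filter (fun g : G => orderOf g = r)).filter
      (fun g => Subgroup.zpowers g = P) = (univ.filter (fun g : G => g ∈ P)).erase 1 := by
    ext g
    simp only [mem_filter, mem_univ, true_and, mem_erase, Finset.filter_filter]
    constructor
    · rintro ⟨ho, hz⟩
      refine ⟨?_, hz ▸ Subgroup.mem_zpowers g⟩
      rintro rfl
      rw [orderOf_one] at ho
      exact hr.one_lt.ne' ho.symm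
    · rintro ⟨hg1, hgP⟩
      have hle : Subgroup.zpowers g ≤ P := Subgroup.zpowers_le.mpr hgP
      have hdvd : orderOf g ∣ r := by
        rw [← Nat.card_zpowers, ← hP]
        exact Subgroup.card_dvd_of_le hle
      have ho : orderOf g = r := by
        rcases (Nat.Prime.eq_one_or_self_of_dvd hr _ hdvd) with h | h
        · exact absurd (orderOf_eq_one_iff.mp h) hg1
        · exact h
      refine ⟨ho, Subgroup.eq_of_le_of_card_ge hle ?_⟩
      rw [hP, Nat.card_zpowers, ho]
  rw [hfib, Finset.card_erase_of_mem (by simp [P.one_mem]),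
    show (univ.filter (fun g : G => g ∈ P)).card = Nat.card P by
      rw [Nat.card_eq_fintype_card, Fintype.card_subtype], hP]

end Aux2

open Filter Asymptotics

/-- with `n = |G| ≥ 2`, `p` the smallest prime dividing `n`, `c` the
number of elements of `G` of order exactly `p`, and `f q` the number of aperiodic
configurations in `{0,…,q−1}^G`, we have
`f q = q^n − (c/(p−1))·q^{n/p} + o(q^{n/p})` as `q → ∞`. -/
theorem ac_asymptotics [Group G] [Fintype G] (hn : 2 ≤ Fintype.card G) :
    (fun q : ℕ =>
        (Nat.card {x : G → Fin q // stab x = ⊥} : ℝ) -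
          (q : ℝ) ^ (Fintype.card G) +
          ((Nat.card {g : G // orderOf g = (Fintype.card G).minFac} : ℝ) /
              (((Fintype.card G).minFac : ℝ) - 1)) *
            (q : ℝ) ^ (Fintype.card G / (Fintype.card G).minFac)) =o[atTop]
      (fun q : ℕ => (q : ℝ) ^ (Fintype.card G / (Fintype.card G).minFac)) := by
  classical
  set n := Fintype.card G with hn_def
  set p := n.minFac with hp_def
  have hp : p.Prime := Nat.minFac_prime (by omega)
  have hpn : p ∣ n := Nat.minFac_dvd n
  set k := n / p with hk_def
  have hkp : k * p = n := Nat.div_mul_cancel hpn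
  have hk1 : 1 ≤ k := Nat.div_pos (Nat.minFac_le (by omega)) hp.pos
  set Sp : Finset (Subgroup G) := Finset.univ.filter (fun P => Nat.card P = p) with hSp_def
  set S : Finset (Subgroup G) := Finset.univ.filter (fun P => (Nat.card P).Prime) with hS_def
  have hSpS : Sp ⊆ S := by
    intro P hP
    simp only [hSp_def, hS_def, Finset.mem_filter, Finset.mem_univ, true_and] at *
    rw [hP]; exact hp
  set N := Sp.card with hN_def
  have hmemfix : ∀ (q : ℕ) (P : Subgroup G) (x : G → Fin q), x ∈ fixSet q P ↔ P ≤ stab x := by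
    intro q P x; simp [fixSet]
  -- exponent bound for subgroups of card > p
  have key : ∀ P : Subgroup G, p < Nat.card P → Nat.card P ∣ n → n / Nat.card P ≤ k - 1 := by
    intro P hlt hdvd
    have h1 : n / Nat.card P < k := by
      by_contra h
      push_neg at h
      have h2 : n / Nat.card P * Nat.card P = n := Nat.div_mul_cancel hdvd
      have hpos : 0 < n / Nat.card P := lt_of_lt_of_le hk1 h
      have c1 : k * p ≤ (n / Nat.card P) * p := mul_le_mul_left h p
      have c2 : (n / Nat.card P) * p < (n / Nat.card P) * Nat.card P :=
        mul_lt_mul_of_pos_left hlt hpos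
      rw [h2] at c2
      rw [hkp] at c1
      exact absurd (lt_of_le_of_lt c1 c2) (lt_irrefl n)
    omega
  have hdvdn : ∀ P : Subgroup G, Nat.card P ∣ n := by
    intro P
    exact (Subgroup.card_subgroup_dvd_card P).trans (dvd_of_eq Nat.card_eq_fintype_card)
  have hfixp : ∀ (q : ℕ) (P : Subgroup G), P ∈ Sp → (fixSet q P).card = q ^ k := by
    intro q P hP
    simp only [hSp_def, Finset.mem_filter, Finset.mem_univ, true_and] at hP
    rw [card_fixSet, hP]
  have hfixbig : ∀ (q : ℕ), 1 ≤ q → ∀ P : Subgroup G, p < Nat.card P →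
      (fixSet q P).card ≤ q ^ (k - 1) := by
    intro q hq P h1
    rw [card_fixSet]
    exact Nat.pow_le_pow_right hq (key P h1 (hdvdn P))
  -- the bad set as a union
  have hbad : ∀ q : ℕ, (Finset.univ.filter (fun x : G → Fin q => ¬ stab x = ⊥))
      = S.biUnion (fun P => fixSet q P) := by
    intro q
    ext x
    simp only [Finset.mem_filter, Finset.mem_univ, true_and, Finset.mem_biUnion]
    constructor
    · intro hx
      obtain ⟨g, hg, hgp⟩ := exists_prime_orderOf_mem hx
      refine ⟨Subgroup.zpowers g, ?_, ?_⟩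
      · simp only [hS_def, Finset.mem_filter, Finset.mem_univ, true_and, Nat.card_zpowers]
        exact hgp
      · rw [hmemfix]
        exact Subgroup.zpowers_le.mpr hg
    · rintro ⟨P, hP, hPx⟩ hbot
      rw [hmemfix] at hPx
      simp only [hS_def, Finset.mem_filter, Finset.mem_univ, true_and] at hP
      rw [hbot, le_bot_iff] at hPx
      rw [hPx, Subgroup.card_bot] at hP
      exact Nat.not_prime_one hP
  set B : ℕ → ℕ :=
    fun q => (Finset.univ.filter (fun x : G → Fin q => ¬ stab x = ⊥)).card with hB_def
  have hBq : ∀ q : ℕ, B q = (Finset.univ.filter (fun x : G → Fin q => ¬ stab x = ⊥)).card :=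
    fun _ => rfl
  have hfB : ∀ q : ℕ, Nat.card {x : G → Fin q // stab x = ⊥} + B q = q ^ n := by
    intro q
    rw [Nat.card_eq_fintype_card, Fintype.card_subtype, hBq,
      Finset.card_filter_add_card_filter_not, Finset.card_univ]
    rw [hn_def, Fintype.card_fun, Fintype.card_fin]
  -- upper bound
  have hupper : ∀ q : ℕ, 1 ≤ q → B q ≤ N * q ^ k + S.card * q ^ (k - 1) := by
    intro q hq
    rw [hBq, hbad q]
    calc (S.biUnion (fun P => fixSet q P)).card ≤ ∑ P ∈ S, (fixSet q P).card :=
        Finset.card_biUnion_le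
      _ = ∑ P ∈ S \ Sp, (fixSet q P).card + ∑ P ∈ Sp, (fixSet q P).card :=
        (Finset.sum_sdiff hSpS).symm
      _ ≤ S.card * q ^ (k - 1) + N * q ^ k := by
        apply Nat.add_le_add
        · -- ∑ over S \ Sp
          have hstep : ∀ P ∈ S \ Sp, (fixSet q P).card ≤ q ^ (k - 1) := by
            intro P hP
            rw [Finset.mem_sdiff] at hP
            obtain ⟨hPS, hPSp⟩ := hP
            simp only [hS_def, Finset.mem_filter, Finset.mem_univ, true_and] at hPS
            simp only [hSp_def, Finset.mem_filter, Finset.mem_univ, true_and] at hPSp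
            have hge : p ≤ Nat.card P := Nat.minFac_le_of_dvd hPS.two_le (hdvdn P)
            exact hfixbig q hq P (lt_of_le_of_ne hge (Ne.symm hPSp))
          calc ∑ P ∈ S \ Sp, (fixSet q P).card ≤ (S \ Sp).card • q ^ (k - 1) :=
              Finset.sum_le_card_nsmul _ _ _ hstep
            _ ≤ S.card * q ^ (k - 1) := by
              rw [smul_eq_mul]
              exact mul_le_mul_left (Finset.card_le_card Finset.sdiff_subset) _
        · -- ∑ over Sp
          exact le_of_eq (by rw [Finset.sum_congr rfl (hfixp q), Finset.sum_const, smul_eq_mul])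
      _ = N * q ^ k + S.card * q ^ (k - 1) := by ring
  -- lower bound
  have hlower : ∀ q : ℕ, 1 ≤ q → N * q ^ k ≤ B q + N * (N * N * q ^ (k - 1)) := by
    intro q hq
    set bigBad : Finset (G → Fin q) :=
      ((Sp ×ˢ Sp).filter (fun pr => pr.1 ≠ pr.2)).biUnion
        (fun pr => fixSet q pr.1 ∩ fixSet q pr.2) with hbb_def
    have hinter : ∀ pr : Subgroup G × Subgroup G,
        pr ∈ (Sp ×ˢ Sp).filter (fun pr => pr.1 ≠ pr.2) →
        (fixSet q pr.1 ∩ fixSet q pr.2).card ≤ q ^ (k - 1) := by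
      rintro ⟨P, P'⟩ hpr
      rw [Finset.mem_filter, Finset.mem_product] at hpr
      obtain ⟨⟨hP, hP'⟩, hne⟩ := hpr
      simp only [hSp_def, Finset.mem_filter, Finset.mem_univ, true_and] at hP hP'
      have hinter_eq : fixSet q P ∩ fixSet q P' = fixSet q (P ⊔ P') := by
        ext x
        rw [Finset.mem_inter, hmemfix, hmemfix, hmemfix, sup_le_iff]
      rw [hinter_eq]
      apply hfixbig q hq
      have hle1 : P ≤ P ⊔ P' := le_sup_left
      have hdvd1 : Nat.card P ∣ Nat.card (P ⊔ P' : Subgroup G) := Subgroup.card_dvd_of_le hle1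
      have hge : p ≤ Nat.card (P ⊔ P' : Subgroup G) := by
        rw [← hP]
        exact Nat.le_of_dvd Nat.card_pos hdvd1
      rcases lt_or_eq_of_le hge with h | h
      · exact h
      · exfalso
        have hPsup : P = P ⊔ P' := Subgroup.eq_of_le_of_card_ge hle1 (by rw [hP, ← h])
        have hle2 : P' ≤ P := by rw [hPsup]; exact le_sup_right
        have : P' = P := Subgroup.eq_of_le_of_card_ge hle2 (by rw [hP, hP'])
        exact hne this.symm
    have hBB : bigBad.card ≤ N * N * q ^ (k - 1) := by
      calc bigBad.card ≤ ∑ pr ∈ (Sp ×ˢ Sp).filter (fun pr => pr.1 ≠ pr.2),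
            (fixSet q pr.1 ∩ fixSet q pr.2).card := Finset.card_biUnion_le
        _ ≤ ((Sp ×ˢ Sp).filter (fun pr => pr.1 ≠ pr.2)).card * q ^ (k - 1) := by
            rw [← smul_eq_mul]
            exact Finset.sum_le_card_nsmul _ _ _ hinter
        _ ≤ N * N * q ^ (k - 1) := by
            apply mul_le_mul_left
            calc ((Sp ×ˢ Sp).filter (fun pr => pr.1 ≠ pr.2)).card
                ≤ (Sp ×ˢ Sp).card := Finset.card_filter_le _ _
              _ = N * N := by rw [Finset.card_product]
    have hdisj : ∀ P ∈ Sp, ∀ P' ∈ Sp, P ≠ P' →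
        Disjoint (fixSet q P \ bigBad) (fixSet q P' \ bigBad) := by
      intro P hP P' hP' hne
      rw [Finset.disjoint_left]
      intro x hx1 hx2
      rw [Finset.mem_sdiff] at hx1 hx2
      exact hx1.2 (Finset.mem_biUnion.mpr ⟨(P, P'),
        Finset.mem_filter.mpr ⟨Finset.mem_product.mpr ⟨hP, hP'⟩, hne⟩,
        Finset.mem_inter.mpr ⟨hx1.1, hx2.1⟩⟩)
    have hsum : ∑ P ∈ Sp, (fixSet q P \ bigBad).card ≤ B q := by
      rw [← Finset.card_biUnion hdisj]
      have hsub : Sp.biUnion (fun P => fixSet q P \ bigBad)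
          ⊆ S.biUnion (fun P => fixSet q P) := by
        intro x hx
        rw [Finset.mem_biUnion] at hx ⊢
        obtain ⟨P, hP, hxP⟩ := hx
        exact ⟨P, hSpS hP, (Finset.sdiff_subset) hxP⟩
      calc (Sp.biUnion (fun P => fixSet q P \ bigBad)).card
          ≤ (S.biUnion (fun P => fixSet q P)).card := Finset.card_le_card hsub
        _ = B q := by rw [hBq, hbad q]
    calc N * q ^ k = ∑ P ∈ Sp, (fixSet q P).card := by
          rw [Finset.sum_congr rfl (hfixp q), Finset.sum_const, smul_eq_mul]
      _ ≤ ∑ P ∈ Sp, ((fixSet q P \ bigBad).card + bigBad.card) := by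
          apply Finset.sum_le_sum
          intro P hP
          exact Finset.card_le_card_sdiff_add_card
      _ = (∑ P ∈ Sp, (fixSet q P \ bigBad).card) + N * bigBad.card := by
          rw [Finset.sum_add_distrib, Finset.sum_const, smul_eq_mul]
      _ ≤ B q + N * (N * N * q ^ (k - 1)) := by
          exact Nat.add_le_add hsum (mul_le_mul_right hBB N)
  -- identify the constant c
  have hcN : Nat.card {g : G // orderOf g = p} = N * (p - 1) := by
    rw [Nat.card_eq_fintype_card, Fintype.card_subtype, card_orderOf_eq_prime hp, hN_def, hSp_def]
  have hp2 : (2 : ℝ) ≤ (p : ℝ) := by exact_mod_cast hp.two_le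
  have hne0 : (p : ℝ) - 1 ≠ 0 := by linarith
  have hcR : ((Nat.card {g : G // orderOf g = p} : ℕ) : ℝ) / ((p : ℝ) - 1) = (N : ℝ) := by
    rw [hcN]
    push_cast [Nat.cast_sub hp.one_lt.le]
    rw [mul_div_assoc, div_self hne0, mul_one]
  -- rewrite the target function
  have hexpr : (fun q : ℕ =>
        (Nat.card {x : G → Fin q // stab x = ⊥} : ℝ) - (q : ℝ) ^ n +
          ((Nat.card {g : G // orderOf g = p} : ℝ) / ((p : ℝ) - 1)) * (q : ℝ) ^ k)
      = fun q : ℕ => (N : ℝ) * (q : ℝ) ^ k - (B q : ℝ) := by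
    funext q
    have h1 := hfB q
    have h2 : (Nat.card {x : G → Fin q // stab x = ⊥} : ℝ) = (q : ℝ) ^ n - (B q : ℝ) := by
      have := congrArg (Nat.cast : ℕ → ℝ) h1
      push_cast at this
      linarith
    rw [h2, hcR]
    ring
  rw [hexpr]
  -- final asymptotics
  have hbound : ∀ q : ℕ, 1 ≤ q →
      |(N : ℝ) * (q : ℝ) ^ k - (B q : ℝ)| ≤ ((S.card + N * N * N : ℕ) : ℝ) * (q : ℝ) ^ (k - 1) := by
    intro q hq
    have h1' : (B q : ℝ) ≤ N * (q : ℝ) ^ k + S.card * (q : ℝ) ^ (k - 1) := by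
      exact_mod_cast hupper q hq
    have h2' : (N : ℝ) * (q : ℝ) ^ k ≤ (B q : ℝ) + N * (N * N * (q : ℝ) ^ (k - 1)) := by
      exact_mod_cast hlower q hq
    have hS0 : (0:ℝ) ≤ (S.card : ℝ) * (q : ℝ) ^ (k - 1) := by positivity
    have hN3 : (0:ℝ) ≤ (N:ℝ) * ((N:ℝ) * (N:ℝ) * (q : ℝ) ^ (k - 1)) := by positivity
    have key1 : ((S.card + N * N * N : ℕ) : ℝ) * (q : ℝ) ^ (k - 1)
        = (S.card : ℝ) * (q : ℝ) ^ (k - 1) + (N:ℝ) * ((N:ℝ) * (N:ℝ) * (q : ℝ) ^ (k - 1)) := by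
      push_cast; ring
    rw [abs_le, key1]
    constructor
    · linarith
    · linarith
  apply IsBigO.trans_isLittleO (g := fun q : ℕ => (q : ℝ) ^ (k - 1))
  · rw [isBigO_iff]
    refine ⟨((S.card + N * N * N : ℕ) : ℝ), ?_⟩
    filter_upwards [eventually_ge_atTop 1] with q hq
    rw [Real.norm_eq_abs, Real.norm_eq_abs]
    conv_rhs => rw [abs_of_nonneg (show (0:ℝ) ≤ (q:ℝ) ^ (k - 1) by positivity)]
    exact hbound q hq
  · exact (Asymptotics.isLittleO_pow_pow_atTop_of_lt (by omega : k - 1 < k)).comp_tendsto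
      tendsto_natCast_atTop_atTop
end
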